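/- For a homogeneous polynomial f of degree ν in n ≥ 2 variables, f vanishes on the isotropic cone {a ∈ ℂⁿ : Σⱼ aⱼ² = 0} if and only if f is divisible by |x|² = x₁² + ... + xₙ² in ℂ[x₁,...,xₙ]. -/

import Mathlib

open MvPolynomial

set_option maxHeartbeats 1000000 in
/-- A homogeneous polynomial vanishes on the isotropic cone iff it is divisible by |x|². -/
theorem vanish_isotropic_iff_normSq_dvd (n ν : ℕ) (hn : 2 ≤ n)
    (f : MvPolynomial (Fin n) ℂ) (hf : f.IsHomogeneous ν) :
    (∀ a : Fin n → ℂ, (∑ j, a j ^ 2) = 0 → eval a f = 0) ↔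
      (∑ j, (X j : MvPolynomial (Fin n) ℂ) ^ 2) ∣ f := by
  obtain ⟨m, rfl⟩ : ∃ m, n = m + 1 := ⟨n - 1, by omega⟩
  set q : MvPolynomial (Fin (m + 1)) ℂ := ∑ j, X j ^ 2 with hq
  have heval : ∀ a : Fin (m + 1) → ℂ, eval a q = ∑ j, a j ^ 2 := by
    intro a; simp [hq]
  have hq0 : q ≠ 0 := by
    intro h
    have := heval (fun _ => 1)
    rw [h] at this
    simp at this
    have h0 : ((m + 1 : ℕ) : ℂ) = 0 := by push_cast; exact this.symm
    exact Nat.cast_ne_zero.mpr (Nat.succ_ne_zero m) h0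
  have hder : ∀ i : Fin (m + 1), pderiv i q = 2 * X i := by
    intro i
    simp [hq, Pi.single_apply, mul_ite, Finset.sum_ite_eq', mul_comm]
  have hsq : Squarefree q := by
    rw [squarefree_iff_no_irreducibles hq0]
    intro p hp hpd
    obtain ⟨r, hr⟩ := hpd
    have hpdvd : ∀ i : Fin (m + 1), p ∣ X i := by
      intro i
      have h1 : p ∣ pderiv i q := by
        rw [hr, pderiv_mul, pderiv_mul]
        exact dvd_add (dvd_mul_of_dvd_left
          (dvd_add (dvd_mul_left p _) (dvd_mul_right p _)) r)
          (dvd_mul_of_dvd_left (dvd_mul_right p p) _)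
      rw [hder i] at h1
      have h2 : IsUnit (2 : MvPolynomial (Fin (m + 1)) ℂ) := by
        have := (isUnit_iff_ne_zero.mpr (two_ne_zero (α := ℂ))).map
          (C : ℂ →+* MvPolynomial (Fin (m + 1)) ℂ)
        rwa [map_ofNat] at this
      exact h2.dvd_mul_left.mp h1
    have hXprime : ∀ i : Fin (m + 1), Prime (X (R := ℂ) i) := by
      intro i
      rw [← MulEquiv.prime_iff ((renameEquiv ℂ (Equiv.swap i 0)).trans (finSuccEquiv ℂ m)).toMulEquiv]
      have he : ((renameEquiv ℂ (Equiv.swap i 0)).trans (finSuccEquiv ℂ m)).toMulEquiv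
          (X i) = Polynomial.X := by
        show (finSuccEquiv ℂ m) ((renameEquiv ℂ (Equiv.swap i 0)) (X i)) = Polynomial.X
        rw [renameEquiv_apply, rename_X, Equiv.swap_apply_left, finSuccEquiv_X_zero]
      rw [he]
      exact Polynomial.prime_X
    set i0 : Fin (m + 1) := ⟨0, by omega⟩
    set i1 : Fin (m + 1) := ⟨1, by omega⟩
    have hX : Irreducible (X (R := ℂ) (σ := Fin (m + 1)) i0) := (hXprime i0).irreducible
    have hX1 : Irreducible (X (R := ℂ) (σ := Fin (m + 1)) i1) := (hXprime i1).irreducible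
    have ha : Associated p (X (R := ℂ) i0) := hp.associated_of_dvd hX (hpdvd i0)
    have hb : Associated p (X (R := ℂ) i1) := hp.associated_of_dvd hX1 (hpdvd i1)
    have hab : (X (R := ℂ) i0 : MvPolynomial (Fin (m + 1)) ℂ) ∣ X i1 :=
      (ha.symm.trans hb).dvd
    obtain ⟨c, hc⟩ := hab
    have := congrArg (eval (fun j => if j = i1 then 1 else 0)) hc
    simp [show i0 ≠ i1 by simp [i0, i1, Fin.ext_iff]] at this
  have hrad : (Ideal.span {q}).IsRadical :=
    isRadical_iff_span_singleton.mp hsq.isRadical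
  constructor
  · intro h
    have hmem : f ∈ vanishingIdeal ℂ (zeroLocus ℂ (Ideal.span {q})) := by
      rw [mem_vanishingIdeal_iff]
      intro x hx
      change eval x f = 0
      apply h
      have := (mem_zeroLocus_iff).mp hx q (Ideal.subset_span rfl)
      change eval x q = 0 at this
      rwa [heval] at this
    rw [vanishingIdeal_zeroLocus_eq_radical, hrad.radical] at hmem
    exact Ideal.mem_span_singleton.mp hmem
  · rintro ⟨g, rfl⟩ a ha
    rw [map_mul, heval, ha, zero_mul]
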